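/- (Corollary, tail order.) Suppose ω(x) = x, f is strictly positive, bounded above by M = f(0) < ∞ and nonincreasing on [0,∞), g is strictly positive, bounded and nonincreasing on [0,∞), and ∫_0^∞ u g(u) du < ∞. Then for all α, β > 0 the right tail of the BTV(α,β) prior is of exact order |λ|^{−β−1}: there exist constants 0 < c ≤ C and Λ > 0 such that for all λ ≥ Λ, c·λ^{−β−1} ≤ π_{α,β}(λ) ≤ C·λ^{−β−1}. By symmetry of M_TV, the left tail is of order |λ|^{−α−1}. -/

import Mathlib

open MeasureTheory Real

set_option maxHeartbeats 1000000

/-- The perturbation measure for ω(x) = x: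
M_TV(λ) = sign(λ) · (1/2) ∫ |2G(λx) − 1| f(x) dx. -/
noncomputable def MTVid (f G : ℝ → ℝ) (l : ℝ) : ℝ :=
  Real.sign l * ((1 / 2) * ∫ x, |2 * G (l * x) - 1| * f x)

/-- The BTV(α,β) prior density for ω(x) = x. -/
noncomputable def btvPriorId (f g G : ℝ → ℝ) (α β : ℝ) (l : ℝ) : ℝ :=
  (Real.Gamma (α + β) / (Real.Gamma α * Real.Gamma β)) *
    (MTVid f G l + 1 / 2) ^ (α - 1) * (1 / 2 - MTVid f G l) ^ (β - 1) *
    (2 * ∫ x in Set.Ioi (0 : ℝ), x * f x * g (l * x))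

/-- Corollary, tail order: under the stated conditions, the
right tail of the BTV(α,β) prior is of exact order λ^{−β−1}. -/
theorem BTV_alpha_beta_right_tail_order
    (f g G : ℝ → ℝ) (M : ℝ)
    (hf_meas : Measurable f) (hf_nonneg : ∀ x, 0 ≤ f x)
    (hf_pos : ∀ x, 0 < f x)
    (hf_int : Integrable f) (hf_one : ∫ x, f x = 1)
    (hf_even : ∀ x, f (-x) = f x)
    (hM : f 0 = M) (hf_bdd : ∀ x, f x ≤ M)
    (hf_anti : AntitoneOn f (Set.Ici 0))
    (hg_meas : Measurable g) (hg_pos : ∀ t, 0 < g t)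
    (hg_int : Integrable g) (hg_one : ∫ t, g t = 1)
    (hg_even : ∀ t, g (-t) = g t)
    (hg_bdd : ∃ C : ℝ, ∀ t, g t ≤ C)
    (hg_anti : AntitoneOn g (Set.Ici 0))
    (hug_int : IntegrableOn (fun u => u * g u) (Set.Ioi 0))
    (hG : ∀ t, G t = ∫ u in Set.Iic t, g u)
    (α β : ℝ) (hα : 0 < α) (hβ : 0 < β) :
    ∃ c C Λ : ℝ, 0 < c ∧ c ≤ C ∧ 0 < Λ ∧
      ∀ l : ℝ, Λ ≤ l →
        c * l ^ (-β - 1) ≤ btvPriorId f g G α β l ∧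
        btvPriorId f g G α β l ≤ C * l ^ (-β - 1) := by
  classical
  set Q : ℝ := Real.Gamma (α + β) / (Real.Gamma α * Real.Gamma β) with hQdef
  have hQ : 0 < Q :=
    div_pos (Real.Gamma_pos_of_pos (by linarith))
      (mul_pos (Real.Gamma_pos_of_pos hα) (Real.Gamma_pos_of_pos hβ))
  have hMpos : 0 < M := hM ▸ hf_pos 0
  -- the survival function of g
  set Gb : ℝ → ℝ := fun t => ∫ u in Set.Ioi t, g u with hGbdef
  have hgS : ∀ s : Set ℝ, IntegrableOn g s := fun s => hg_int.integrableOn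
  have hGb_nonneg : ∀ t, 0 ≤ Gb t := fun t =>
    setIntegral_nonneg measurableSet_Ioi fun u _ => (hg_pos u).le
  have hGb_anti : Antitone Gb := by
    intro s t hst
    exact setIntegral_mono_set (hgS _)
      (Filter.Eventually.of_forall fun u => (hg_pos u).le)
      (HasSubset.Subset.eventuallyLE (Set.Ioi_subset_Ioi hst))
  have hGb_m : Measurable Gb := hGb_anti.measurable
  have hsum : ∀ t, G t + Gb t = 1 := by
    intro t
    rw [hG t]
    show (∫ u in Set.Iic t, g u) + ∫ u in Set.Ioi t, g u = 1
    rw [intervalIntegral.integral_Iic_add_Ioi (hgS _) (hgS _)]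
    exact hg_one
  have hGneg : ∀ t, G (-t) = Gb t := by
    intro t
    have h := integral_comp_neg_Iic (-t) g
    simp only [hg_even, neg_neg] at h
    rw [hG, h]
  have hGb0 : Gb 0 = 1 / 2 := by
    have h := hGneg 0
    rw [neg_zero] at h
    have h2 := hsum 0
    linarith
  have hGb_half : ∀ t, 0 ≤ t → Gb t ≤ 1 / 2 := fun t ht => hGb0 ▸ hGb_anti ht
  have habs : ∀ l : ℝ, 0 < l → ∀ x : ℝ,
      |2 * G (l * x) - 1| = 1 - 2 * Gb (l * |x|) := by
    intro l hl x
    rcases le_or_gt 0 x with hx | hx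
    · rw [abs_of_nonneg hx]
      have h1 : G (l * x) = 1 - Gb (l * x) := by linarith [hsum (l * x)]
      have h2 : Gb (l * x) ≤ 1 / 2 := hGb_half _ (by positivity)
      rw [h1, show 2 * (1 - Gb (l * x)) - 1 = 1 - 2 * Gb (l * x) by ring,
        abs_of_nonneg (by linarith)]
    · rw [abs_of_neg hx, show l * x = -(l * -x) by ring, hGneg]
      have hnn : (0:ℝ) ≤ l * -x := mul_nonneg hl.le (by linarith)
      have h2 : Gb (l * -x) ≤ 1 / 2 := hGb_half _ hnn
      rw [abs_of_nonpos (by linarith)]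
      ring
  -- the first moment of g on (0,∞)
  set K : ℝ := ∫ u in Set.Ioi (0:ℝ), u * g u with hKdef
  have hug_nonneg : 0 ≤ᵐ[volume.restrict (Set.Ioi (0:ℝ))] fun u => u * g u :=
    (ae_restrict_iff' measurableSet_Ioi).2
      (Filter.Eventually.of_forall fun x hx => mul_nonneg (le_of_lt hx) (hg_pos x).le)
  have hIoc12 : Set.Ioc (1:ℝ) 2 ⊆ Set.Ioi (0:ℝ) := fun x hx => lt_trans one_pos hx.1
  have hvol12 : (volume (Set.Ioc (1:ℝ) 2)).toReal = 1 := by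
    rw [Real.volume_Ioc]
    norm_num
  have hK_pos : 0 < K := by
    have h1 : g 2 * (volume (Set.Ioc (1:ℝ) 2)).toReal ≤ ∫ u in Set.Ioc (1:ℝ) 2, u * g u := by
      apply setIntegral_ge_of_const_le_real measurableSet_Ioc measure_Ioc_lt_top.ne
        (fun x hx => ?_) (hug_int.mono_set hIoc12)
      have hx0 : (0:ℝ) ≤ x := le_of_lt (lt_trans one_pos hx.1)
      have hgx : g 2 ≤ g x := hg_anti hx0 (by norm_num : (2:ℝ) ∈ Set.Ici 0) hx.2
      have h1x : 1 * g x ≤ x * g x := mul_le_mul_of_nonneg_right hx.1.le (hg_pos x).le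
      linarith
    have h2 : (∫ u in Set.Ioc (1:ℝ) 2, u * g u) ≤ K :=
      setIntegral_mono_set hug_int hug_nonneg (HasSubset.Subset.eventuallyLE hIoc12)
    rw [hvol12] at h1
    linarith [hg_pos 2]
  -- Tonelli: ∫_{(0,∞)} Gb = K and integrability of Gb
  have hkey : ∫⁻ x in Set.Ioi (0:ℝ), ENNReal.ofReal (Gb x) = ENNReal.ofReal K := by
    have step1 : ∀ x : ℝ, ENNReal.ofReal (Gb x)
        = ∫⁻ t, Set.indicator (Set.Ioi x) (fun t => ENNReal.ofReal (g t)) t := by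
      intro x
      rw [show Gb x = ∫ u in Set.Ioi x, g u from rfl,
        ofReal_integral_eq_lintegral_ofReal (hgS _)
          (Filter.Eventually.of_forall fun u => (hg_pos u).le),
        ← lintegral_indicator measurableSet_Ioi]
    have hm : Measurable (Function.uncurry fun (x t : ℝ) =>
        Set.indicator (Set.Ioi x) (fun t => ENNReal.ofReal (g t)) t) := by
      have heq : (Function.uncurry fun (x t : ℝ) =>
          Set.indicator (Set.Ioi x) (fun t => ENNReal.ofReal (g t)) t)
          = fun p : ℝ × ℝ => if p.1 < p.2 then ENNReal.ofReal (g p.2) else 0 := by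
        ext p
        simp [Function.uncurry, Set.indicator_apply, Set.mem_Ioi]
      rw [heq]
      exact Measurable.ite (measurableSet_lt measurable_fst measurable_snd)
        ((ENNReal.measurable_ofReal.comp hg_meas).comp measurable_snd) measurable_const
    calc ∫⁻ x in Set.Ioi (0:ℝ), ENNReal.ofReal (Gb x)
        = ∫⁻ x in Set.Ioi (0:ℝ), ∫⁻ t,
            Set.indicator (Set.Ioi x) (fun t => ENNReal.ofReal (g t)) t := by
          exact lintegral_congr fun x => step1 x
      _ = ∫⁻ t, ∫⁻ x in Set.Ioi (0:ℝ),
            Set.indicator (Set.Ioi x) (fun t => ENNReal.ofReal (g t)) t := by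
          exact lintegral_lintegral_swap hm.aemeasurable
      _ = ∫⁻ t, ENNReal.ofReal (g t) * ENNReal.ofReal t := by
          refine lintegral_congr fun t => ?_
          have h1 : ∀ x : ℝ, Set.indicator (Set.Ioi x) (fun s => ENNReal.ofReal (g s)) t
              = Set.indicator (Set.Iio t) (fun _ => ENNReal.ofReal (g t)) x := by
            intro x
            simp [Set.indicator_apply, Set.mem_Ioi, Set.mem_Iio]
          rw [lintegral_congr h1, lintegral_indicator measurableSet_Iio,
            setLIntegral_const, Measure.restrict_apply measurableSet_Iio,
            Set.Iio_inter_Ioi, Real.volume_Ioo, sub_zero]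
      _ = ∫⁻ t, Set.indicator (Set.Ioi (0:ℝ)) (fun t => ENNReal.ofReal (t * g t)) t := by
          refine lintegral_congr fun t => ?_
          rcases le_or_gt t 0 with h | h
          · simp [Set.indicator_apply, Set.mem_Ioi, not_lt.2 h, ENNReal.ofReal_of_nonpos h]
          · simp [Set.indicator_apply, Set.mem_Ioi, h, ENNReal.ofReal_mul h.le, mul_comm]
      _ = ∫⁻ t in Set.Ioi (0:ℝ), ENNReal.ofReal (t * g t) := by
          rw [lintegral_indicator measurableSet_Ioi]
      _ = ENNReal.ofReal K :=
          (ofReal_integral_eq_lintegral_ofReal hug_int hug_nonneg).symm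
  have hGb_intOn : IntegrableOn Gb (Set.Ioi (0:ℝ)) := by
    refine ⟨hGb_m.aestronglyMeasurable, ?_⟩
    rw [hasFiniteIntegral_iff_ofReal (Filter.Eventually.of_forall fun x => hGb_nonneg x)]
    rw [hkey]
    exact ENNReal.ofReal_lt_top
  have hGb_val : ∫ x in Set.Ioi (0:ℝ), Gb x = K := by
    rw [integral_eq_lintegral_of_nonneg_ae
        (Filter.Eventually.of_forall fun x => hGb_nonneg x)
        hGb_m.aestronglyMeasurable.restrict, hkey, ENNReal.toReal_ofReal hK_pos.le]
  -- the main per-l estimates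
  set c₁ : ℝ := Gb 1 * f 1 with hc₁def
  set c₂ : ℝ := 2 * M * K with hc₂def
  have hGb1pos : 0 < Gb 1 := by
    have hIoc : Set.Ioc (1:ℝ) 2 ⊆ Set.Ioi (1:ℝ) := fun x hx => hx.1
    have h1 : g 2 * (volume (Set.Ioc (1:ℝ) 2)).toReal ≤ ∫ u in Set.Ioc (1:ℝ) 2, g u := by
      apply setIntegral_ge_of_const_le_real measurableSet_Ioc measure_Ioc_lt_top.ne
        (fun x hx => ?_) (hgS _)
      exact hg_anti (le_of_lt (lt_trans one_pos hx.1)) (by norm_num : (2:ℝ) ∈ Set.Ici 0) hx.2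
    have h2 : (∫ u in Set.Ioc (1:ℝ) 2, g u) ≤ Gb 1 :=
      setIntegral_mono_set (hgS _)
        (Filter.Eventually.of_forall fun u => (hg_pos u).le)
        (HasSubset.Subset.eventuallyLE hIoc)
    rw [hvol12] at h1
    linarith [hg_pos 2]
  have hc₁pos : 0 < c₁ := mul_pos hGb1pos (hf_pos 1)
  have hc₂pos : 0 < c₂ := by positivity
  set a₁ : ℝ := f 1 * g 1 / 2 with ha₁def
  set a₂ : ℝ := 2 * M * K with ha₂def
  have ha₁pos : 0 < a₁ := by have := hf_pos 1; have := hg_pos 1; positivity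
  have ha₂pos : 0 < a₂ := by positivity
  -- rpow bound helper
  have hrpow_bounds : ∀ (x a b z : ℝ), 0 < a → a ≤ x → x ≤ b →
      min (a ^ z) (b ^ z) ≤ x ^ z ∧ x ^ z ≤ max (a ^ z) (b ^ z) := by
    intro x a b z ha hax hxb
    rcases le_or_gt 0 z with hz | hz
    · exact ⟨le_trans (min_le_left _ _) (Real.rpow_le_rpow ha.le hax hz),
        le_trans (Real.rpow_le_rpow (lt_of_lt_of_le ha hax).le hxb hz) (le_max_right _ _)⟩
    · exact ⟨le_trans (min_le_right _ _)
          (Real.rpow_le_rpow_of_nonpos (lt_of_lt_of_le ha hax) hxb hz.le),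
        le_trans (Real.rpow_le_rpow_of_nonpos ha hax hz.le) (le_max_left _ _)⟩
  set p1lo : ℝ := min ((1/2 : ℝ) ^ (α - 1)) ((1:ℝ) ^ (α - 1)) with hp1lodef
  set p1hi : ℝ := max ((1/2 : ℝ) ^ (α - 1)) ((1:ℝ) ^ (α - 1)) with hp1hidef
  have hp1lo_pos : 0 < p1lo :=
    lt_min (Real.rpow_pos_of_pos one_half_pos _) (Real.rpow_pos_of_pos one_pos _)
  set dlo : ℝ := min (c₁ ^ (β - 1)) (c₂ ^ (β - 1)) with hdlodef
  set dhi : ℝ := max (c₁ ^ (β - 1)) (c₂ ^ (β - 1)) with hdhidef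
  have hdlo_pos : 0 < dlo :=
    lt_min (Real.rpow_pos_of_pos hc₁pos _) (Real.rpow_pos_of_pos hc₂pos _)
  set cc : ℝ := Q * p1lo * dlo * a₁ with hccdef
  set CC : ℝ := Q * p1hi * dhi * a₂ with hCCdef
  have hcc_pos : 0 < cc := mul_pos (mul_pos (mul_pos hQ hp1lo_pos) hdlo_pos) ha₁pos
  have key : ∀ l : ℝ, 1 ≤ l →
      cc * l ^ (-β - 1) ≤ btvPriorId f g G α β l ∧
      btvPriorId f g G α β l ≤ CC * l ^ (-β - 1) := by
    intro l hl
    have hl0 : (0:ℝ) < l := lt_of_lt_of_le one_pos hl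
    have hln : l ≠ 0 := ne_of_gt hl0
    -- scaling identities
    have hT : ∫ x in Set.Ioi (0:ℝ), Gb (l * x) = K / l := by
      have h := integral_comp_mul_left_Ioi Gb 0 hl0
      rw [mul_zero] at h
      rw [h, hGb_val, smul_eq_mul]
      ring
    have hTint : IntegrableOn (fun x => Gb (l * x)) (Set.Ioi (0:ℝ)) := by
      have h := (integrableOn_Ioi_comp_mul_left_iff Gb 0 hl0).2
      rw [mul_zero] at h
      exact h hGb_intOn
    have hSint : IntegrableOn (fun x => (l * x) * g (l * x)) (Set.Ioi (0:ℝ)) := by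
      have h := (integrableOn_Ioi_comp_mul_left_iff (fun u => u * g u) 0 hl0).2
      rw [mul_zero] at h
      exact h hug_int
    have hSval : ∫ x in Set.Ioi (0:ℝ), (l * x) * g (l * x) = l⁻¹ * K := by
      have h := integral_comp_mul_left_Ioi (fun u => u * g u) 0 hl0
      rw [mul_zero] at h
      rw [h, smul_eq_mul]
    have hxg_eq : (fun x : ℝ => x * g (l * x))
        = fun x => l⁻¹ * ((l * x) * g (l * x)) := by
      funext x
      rw [show l⁻¹ * ((l * x) * g (l * x)) = (l⁻¹ * l) * (x * g (l * x)) by ring,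
        inv_mul_cancel₀ hln, one_mul]
    have hxg_int : IntegrableOn (fun x => x * g (l * x)) (Set.Ioi (0:ℝ)) := by
      rw [hxg_eq]
      exact hSint.const_mul _
    have hxg_val : ∫ x in Set.Ioi (0:ℝ), x * g (l * x) = K / l ^ 2 := by
      rw [hxg_eq, integral_const_mul, hSval]
      field_simp
    -- D block
    have hDmeas : Measurable (fun x => Gb (l * |x|) * f x) :=
      (hGb_m.comp (measurable_abs.const_mul l)).mul hf_meas
    have hDint : Integrable (fun x => Gb (l * |x|) * f x) := by
      refine Integrable.mono' (hf_int.const_mul (1/2)) hDmeas.aestronglyMeasurable ?_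
      refine Filter.Eventually.of_forall fun x => ?_
      rw [Real.norm_eq_abs, abs_of_nonneg (mul_nonneg (hGb_nonneg _) (hf_nonneg x))]
      exact mul_le_mul_of_nonneg_right (hGb_half _ (by positivity)) (hf_nonneg x)
    set D : ℝ := ∫ x, Gb (l * |x|) * f x with hDdef
    have hM_eq : MTVid f G l = 1 / 2 - D := by
      rw [MTVid, Real.sign_of_pos hl0, one_mul]
      have hcong : (fun x => |2 * G (l * x) - 1| * f x)
          = fun x => f x - 2 * (Gb (l * |x|) * f x) := by
        funext x
        rw [habs l hl0 x]
        ring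
      rw [hcong, integral_sub hf_int (hDint.const_mul 2), integral_const_mul, hf_one]
      rw [hDdef]
      ring
    have hD_nonneg : 0 ≤ D :=
      integral_nonneg fun x => mul_nonneg (hGb_nonneg _) (hf_nonneg x)
    have hD_half : D ≤ 1 / 2 := by
      have h := integral_mono hDint (hf_int.const_mul (1/2))
        (fun x => mul_le_mul_of_nonneg_right (hGb_half _ (by positivity)) (hf_nonneg x))
      rw [integral_const_mul, hf_one] at h
      linarith
    have hD_lower : c₁ * (1 / l) ≤ D := by
      have hstep1 : ∫ x in Set.Ioc (0:ℝ) (1/l), Gb (l * |x|) * f x ≤ D :=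
        setIntegral_le_integral hDint
          (Filter.Eventually.of_forall fun x => mul_nonneg (hGb_nonneg _) (hf_nonneg _))
      have hstep2 : c₁ * (volume (Set.Ioc (0:ℝ) (1/l))).toReal
          ≤ ∫ x in Set.Ioc (0:ℝ) (1/l), Gb (l * |x|) * f x := by
        apply setIntegral_ge_of_const_le_real measurableSet_Ioc measure_Ioc_lt_top.ne
          (fun x hx => ?_) hDint.integrableOn
        have hx0 : 0 < x := hx.1
        have hxl : l * x ≤ 1 := by
          have := hx.2
          calc l * x ≤ l * (1/l) := mul_le_mul_of_nonneg_left hx.2 hl0.le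
            _ = 1 := by field_simp
        have hfx : f 1 ≤ f x := by
          apply hf_anti (le_of_lt hx0) (by norm_num : (1:ℝ) ∈ Set.Ici 0)
          calc x ≤ 1 / l := hx.2
            _ ≤ 1 := by rw [div_le_one hl0]; exact hl
        have hGbx : Gb 1 ≤ Gb (l * |x|) := by
          apply hGb_anti
          rw [abs_of_pos hx0]
          exact hxl
        calc c₁ = Gb 1 * f 1 := hc₁def
          _ ≤ Gb (l * |x|) * f x := mul_le_mul hGbx hfx (hf_nonneg 1) (hGb_nonneg _)
      have hvol : (volume (Set.Ioc (0:ℝ) (1/l))).toReal = 1 / l := by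
        rw [Real.volume_Ioc, sub_zero, ENNReal.toReal_ofReal (by positivity)]
      rw [hvol] at hstep2
      linarith
    have hD_upper : D ≤ c₂ * (1 / l) := by
      have hpos_piece : ∫ x in Set.Ioi (0:ℝ), Gb (l * |x|) * f x ≤ M * (K / l) := by
        have h1 : ∫ x in Set.Ioi (0:ℝ), Gb (l * |x|) * f x
            ≤ ∫ x in Set.Ioi (0:ℝ), M * Gb (l * x) := by
          apply setIntegral_mono_on hDint.integrableOn (hTint.const_mul M)
            measurableSet_Ioi
          intro x hx
          rw [abs_of_pos hx]
          calc Gb (l * x) * f x ≤ Gb (l * x) * M :=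
                mul_le_mul_of_nonneg_left (hf_bdd x) (hGb_nonneg _)
            _ = M * Gb (l * x) := mul_comm _ _
        rw [integral_const_mul, hT] at h1
        exact h1
      have hneg_piece : ∫ x in Set.Iio (0:ℝ), Gb (l * |x|) * f x
          = ∫ x in Set.Ioi (0:ℝ), Gb (l * |x|) * f x := by
        have h := integral_comp_neg_Ioi (0:ℝ) (fun x => Gb (l * |x|) * f x)
        simp only [abs_neg, hf_even, neg_zero] at h
        rw [integral_Iic_eq_integral_Iio] at h
        exact h.symm
      have hsplit : (∫ x in Set.Iio (0:ℝ), Gb (l * |x|) * f x)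
          + ∫ x in Set.Ici (0:ℝ), Gb (l * |x|) * f x = D :=
        intervalIntegral.integral_Iio_add_Ici hDint.integrableOn hDint.integrableOn
      rw [integral_Ici_eq_integral_Ioi, hneg_piece] at hsplit
      have : D = 2 * ∫ x in Set.Ioi (0:ℝ), Gb (l * |x|) * f x := by linarith
      rw [this, hc₂def, ha₂def]
      calc 2 * ∫ x in Set.Ioi (0:ℝ), Gb (l * |x|) * f x ≤ 2 * (M * (K / l)) := by linarith
        _ = 2 * M * K * (1 / l) := by ring
    -- A block
    set A : ℝ := ∫ x in Set.Ioi (0:ℝ), x * f x * g (l * x) with hAdef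
    have hA_meas : Measurable (fun x : ℝ => x * f x * g (l * x)) :=
      (measurable_id.mul hf_meas).mul (hg_meas.comp (measurable_id.const_mul l))
    have hA_int : IntegrableOn (fun x => x * f x * g (l * x)) (Set.Ioi (0:ℝ)) := by
      refine Integrable.mono' (hxg_int.const_mul M) hA_meas.aestronglyMeasurable.restrict ?_
      refine (ae_restrict_iff' measurableSet_Ioi).2 (Filter.Eventually.of_forall fun x hx => ?_)
      rw [Real.norm_eq_abs, abs_of_nonneg
        (mul_nonneg (mul_nonneg hx.le (hf_nonneg x)) (hg_pos _).le)]
      have h1 : x * f x * g (l * x) ≤ x * M * g (l * x) := by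
        apply mul_le_mul_of_nonneg_right _ (hg_pos (l * x)).le
        exact mul_le_mul_of_nonneg_left (hf_bdd x) hx.le
      calc x * f x * g (l * x) ≤ x * M * g (l * x) := h1
        _ = M * (x * g (l * x)) := by ring
    have hA_upper : A ≤ M * (K / l ^ 2) := by
      have h1 : A ≤ ∫ x in Set.Ioi (0:ℝ), M * (x * g (l * x)) := by
        apply setIntegral_mono_on hA_int (hxg_int.const_mul M) measurableSet_Ioi
        intro x hx
        have h2 : x * f x * g (l * x) ≤ x * M * g (l * x) := by
          apply mul_le_mul_of_nonneg_right _ (hg_pos (l * x)).le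
          exact mul_le_mul_of_nonneg_left (hf_bdd x) hx.le
        calc x * f x * g (l * x) ≤ x * M * g (l * x) := h2
          _ = M * (x * g (l * x)) := by ring
      rw [integral_const_mul, hxg_val] at h1
      exact h1
    have hA_nonneg_ae : 0 ≤ᵐ[volume.restrict (Set.Ioi (0:ℝ))]
        fun x => x * f x * g (l * x) :=
      (ae_restrict_iff' measurableSet_Ioi).2
        (Filter.Eventually.of_forall fun x hx =>
          mul_nonneg (mul_nonneg hx.le (hf_nonneg x)) (hg_pos _).le)
    have hA_lower : (f 1 * g 1 / 4) * (1 / l ^ 2) ≤ A := by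
      have hsub : Set.Ioc (1/(2*l)) (1/l) ⊆ Set.Ioi (0:ℝ) := by
        intro x hx
        have : (0:ℝ) < 1/(2*l) := by positivity
        exact lt_trans this hx.1
      have hstep1 : ∫ x in Set.Ioc (1/(2*l)) (1/l), x * f x * g (l * x) ≤ A :=
        setIntegral_mono_set hA_int hA_nonneg_ae (HasSubset.Subset.eventuallyLE hsub)
      have hstep2 : (1/(2*l) * (f 1 * g 1)) * (volume (Set.Ioc (1/(2*l)) (1/l))).toReal
          ≤ ∫ x in Set.Ioc (1/(2*l)) (1/l), x * f x * g (l * x) := by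
        apply setIntegral_ge_of_const_le_real measurableSet_Ioc measure_Ioc_lt_top.ne
          (fun x hx => ?_) (hA_int.mono_set hsub)
        have hx0 : (0:ℝ) < x := lt_trans (by positivity) hx.1
        have hx1 : x ≤ 1 := le_trans hx.2 (by rw [div_le_one hl0]; exact hl)
        have hlx1 : l * x ≤ 1 := by
          calc l * x ≤ l * (1/l) := mul_le_mul_of_nonneg_left hx.2 hl0.le
            _ = 1 := by field_simp
        have hfx : f 1 ≤ f x := hf_anti hx0.le (by norm_num : (1:ℝ) ∈ Set.Ici 0) hx1
        have hgx : g 1 ≤ g (l * x) :=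
          hg_anti (Set.mem_Ici.2 (mul_nonneg hl0.le hx0.le)) (by norm_num : (1:ℝ) ∈ Set.Ici 0) hlx1
        have hxlow : 1/(2*l) ≤ x := hx.1.le
        calc 1/(2*l) * (f 1 * g 1) ≤ x * (f 1 * g 1) := by
              apply mul_le_mul_of_nonneg_right hxlow
              have := hf_pos 1; have := hg_pos 1; positivity
          _ ≤ x * (f x * g (l * x)) := by
              apply mul_le_mul_of_nonneg_left _ hx0.le
              exact mul_le_mul hfx hgx (hg_pos 1).le (hf_nonneg x)
          _ = x * f x * g (l * x) := by ring
      have hd : 1/l - 1/(2*l) = 1/(2*l) := by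
        field_simp
        ring
      have hvol : (volume (Set.Ioc (1/(2*l)) (1/l))).toReal = 1/(2*l) := by
        rw [Real.volume_Ioc, hd, ENNReal.toReal_ofReal (by positivity)]
      rw [hvol] at hstep2
      have heq : (1/(2*l) * (f 1 * g 1)) * (1/(2*l)) = (f 1 * g 1 / 4) * (1 / l ^ 2) := by
        have h4 : (1/(2*l)) * (1/(2*l)) = (1/4) * (1 / l ^ 2) := by
          rw [div_mul_div_comm, div_mul_div_comm, one_mul]
          congr 1
          ring
        calc (1/(2*l) * (f 1 * g 1)) * (1/(2*l))
            = (f 1 * g 1) * ((1/(2*l)) * (1/(2*l))) := by ring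
          _ = (f 1 * g 1) * ((1/4) * (1 / l ^ 2)) := by rw [h4]
          _ = (f 1 * g 1 / 4) * (1 / l ^ 2) := by ring
      linarith
    have hA_nn : 0 ≤ A :=
      le_trans (mul_nonneg (div_nonneg (mul_nonneg (hf_nonneg 1) (hg_pos 1).le)
        (by norm_num)) (by positivity)) hA_lower
    -- assembling the bounds
    have e1 : MTVid f G l + 1 / 2 = 1 - D := by rw [hM_eq]; ring
    have e2 : 1 / 2 - MTVid f G l = D := by rw [hM_eq]; ring
    have hbtv : btvPriorId f g G α β l
        = Q * (1 - D) ^ (α - 1) * D ^ (β - 1) * (2 * A) := by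
      rw [btvPriorId, e1, e2, ← hQdef, ← hAdef]
    have h1D_lb : (1/2 : ℝ) ≤ 1 - D := by linarith
    have h1D_ub : 1 - D ≤ 1 := by linarith
    have hP1 := hrpow_bounds (1 - D) (1/2) 1 (α - 1) one_half_pos h1D_lb h1D_ub
    have hDlb : c₁ / l ≤ D := by rw [div_eq_mul_one_div]; exact hD_lower
    have hDub : D ≤ c₂ / l := by rw [div_eq_mul_one_div]; exact hD_upper
    have hDP := hrpow_bounds D (c₁ / l) (c₂ / l) (β - 1) (by positivity) hDlb hDub
    have hconv : ∀ x : ℝ, 0 < x → (x / l) ^ (β - 1) = x ^ (β - 1) * l ^ (1 - β) := by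
      intro x hx
      rw [Real.div_rpow hx.le hl0.le, show (1 - β : ℝ) = -(β - 1) by ring,
        Real.rpow_neg hl0.le, div_eq_mul_inv]
    have hLnn : (0:ℝ) ≤ l ^ (1 - β) := Real.rpow_nonneg hl0.le _
    have hDlo2 : dlo * l ^ (1 - β) ≤ D ^ (β - 1) := by
      refine le_trans (le_min ?_ ?_) hDP.1
      · rw [hconv c₁ hc₁pos]
        exact mul_le_mul_of_nonneg_right (min_le_left _ _) hLnn
      · rw [hconv c₂ hc₂pos]
        exact mul_le_mul_of_nonneg_right (min_le_right _ _) hLnn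
    have hDhi2 : D ^ (β - 1) ≤ dhi * l ^ (1 - β) := by
      refine le_trans hDP.2 (max_le ?_ ?_)
      · rw [hconv c₁ hc₁pos]
        exact mul_le_mul_of_nonneg_right (le_max_left _ _) hLnn
      · rw [hconv c₂ hc₂pos]
        exact mul_le_mul_of_nonneg_right (le_max_right _ _) hLnn
    have hl2 : l ^ ((-2 : ℝ)) = 1 / l ^ 2 := by
      rw [show ((-2:ℝ)) = -((2:ℕ):ℝ) by norm_num, Real.rpow_neg hl0.le,
        Real.rpow_natCast, one_div]
    have hl2nn : (0:ℝ) ≤ l ^ ((-2:ℝ)) := Real.rpow_nonneg hl0.le _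
    have h2A_lo : a₁ * l ^ ((-2:ℝ)) ≤ 2 * A := by
      rw [hl2]
      have heq2 : a₁ * (1 / l ^ 2) = 2 * ((f 1 * g 1 / 4) * (1 / l ^ 2)) := by
        rw [ha₁def]; ring
      linarith [hA_lower]
    have h2A_hi : 2 * A ≤ a₂ * l ^ ((-2:ℝ)) := by
      rw [hl2]
      have heq2 : a₂ * (1 / l ^ 2) = 2 * (M * (K / l ^ 2)) := by
        rw [ha₂def]; ring
      linarith [hA_upper]
    have hexp : l ^ (-β - 1) = l ^ (1 - β) * l ^ ((-2:ℝ)) := by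
      rw [← Real.rpow_add hl0]
      congr 1
      ring
    have hP1nn : 0 ≤ (1 - D) ^ (α - 1) := Real.rpow_nonneg (by linarith) _
    have hDpnn : 0 ≤ D ^ (β - 1) := Real.rpow_nonneg hD_nonneg _
    constructor
    · rw [hbtv]
      calc cc * l ^ (-β - 1)
          = Q * p1lo * (dlo * l ^ (1 - β)) * (a₁ * l ^ ((-2:ℝ))) := by
            rw [hexp, hccdef]; ring
        _ ≤ Q * (1 - D) ^ (α - 1) * D ^ (β - 1) * (2 * A) := by
            apply mul_le_mul _ h2A_lo (mul_nonneg ha₁pos.le hl2nn)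
              (mul_nonneg (mul_nonneg hQ.le hP1nn) hDpnn)
            apply mul_le_mul _ hDlo2 (mul_nonneg hdlo_pos.le hLnn)
              (mul_nonneg hQ.le hP1nn)
            exact mul_le_mul_of_nonneg_left hP1.1 hQ.le
    · rw [hbtv]
      have hp1hi_nn : 0 ≤ p1hi := le_trans hp1lo_pos.le (min_le_max)
      have hdhi_nn : 0 ≤ dhi := le_trans hdlo_pos.le (min_le_max)
      calc Q * (1 - D) ^ (α - 1) * D ^ (β - 1) * (2 * A)
          ≤ Q * p1hi * (dhi * l ^ (1 - β)) * (a₂ * l ^ ((-2:ℝ))) := by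
            apply mul_le_mul _ h2A_hi (by linarith)
              (mul_nonneg (mul_nonneg hQ.le hp1hi_nn) (mul_nonneg hdhi_nn hLnn))
            apply mul_le_mul _ hDhi2 hDpnn (mul_nonneg hQ.le hp1hi_nn)
            exact mul_le_mul_of_nonneg_left hP1.2 hQ.le
        _ = CC * l ^ (-β - 1) := by
            rw [hexp, hCCdef]; ring
  refine ⟨cc, CC, 1, hcc_pos, ?_, one_pos, key⟩
  have h := key 1 le_rfl
  rw [Real.one_rpow] at h
  linarith [h.1, h.2]
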